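/- Same Sphere Lemma (inclusion side): Let Q, E ⊆ ℝⁿ be finite and let S (center z, squared radius s) be the smallest sphere including Q and excluding E. Suppose x ∈ ℝⁿ satisfies ‖z−x‖² ≤ s and, in the KKT representation z = Σ_{p ∈ On(S)} ρ_p p with Σ ρ_p = 1, either x ∉ On(S) or ρ_x ≤ 0 (i.e., x is not in the front face Front(S)). Then S is also the smallest sphere including Q ∪ {x} and excluding E, and the smallest sphere including Q \ {x} and excluding E. -/

import Mathlib

/-- A sphere with center `z` and squared radius `s ≥ 0` includes `Q`, excludes `E`, and has
minimal squared radius among all such spheres. -/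
def IsSmallestSphere {n : ℕ} (Q E : Finset (EuclideanSpace ℝ (Fin n)))
    (z : EuclideanSpace ℝ (Fin n)) (s : ℝ) : Prop :=
  0 ≤ s ∧ (∀ q ∈ Q, dist z q ^ 2 ≤ s) ∧ (∀ e ∈ E, s ≤ dist z e ^ 2) ∧
    ∀ (z' : EuclideanSpace ℝ (Fin n)) (s' : ℝ), 0 ≤ s' →
      (∀ q ∈ Q, dist z' q ^ 2 ≤ s') → (∀ e ∈ E, s' ≤ dist z' e ^ 2) → s ≤ s'

private lemma key_sum {n : ℕ} (T : Finset (EuclideanSpace ℝ (Fin n)))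
    (z z' : EuclideanSpace ℝ (Fin n)) (s : ℝ) (ρ : EuclideanSpace ℝ (Fin n) → ℝ)
    (hon : ∀ p ∈ T, ρ p ≠ 0 → dist z p ^ 2 = s)
    (hrep : z = ∑ p ∈ T, ρ p • p)
    (hsum : ∑ p ∈ T, ρ p = 1) :
    ∑ p ∈ T, ρ p * dist z' p ^ 2 = s + dist z z' ^ 2 := by
  have expand : ∀ w p : EuclideanSpace ℝ (Fin n),
      dist w p ^ 2 = ‖w‖ ^ 2 - 2 * (inner ℝ w p : ℝ) + ‖p‖ ^ 2 := by
    intro w p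
    rw [dist_eq_norm, @norm_sub_sq_real]
  have hinner : ∀ w : EuclideanSpace ℝ (Fin n),
      ∑ p ∈ T, ρ p * (inner ℝ w p : ℝ) = (inner ℝ w z : ℝ) := by
    intro w
    rw [hrep, inner_sum]
    exact Finset.sum_congr rfl fun p hp => (real_inner_smul_right w p (ρ p)).symm
  have gen : ∀ w : EuclideanSpace ℝ (Fin n),
      ∑ p ∈ T, ρ p * dist w p ^ 2
        = ‖w‖ ^ 2 - 2 * (inner ℝ w z : ℝ) + ∑ p ∈ T, ρ p * ‖p‖ ^ 2 := by
    intro w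
    have hterm : ∀ p ∈ T, ρ p * dist w p ^ 2
        = ρ p * ‖w‖ ^ 2 - ρ p * (2 * (inner ℝ w p : ℝ)) + ρ p * ‖p‖ ^ 2 := by
      intro p _; rw [expand w p]; ring
    rw [Finset.sum_congr rfl hterm, Finset.sum_add_distrib, Finset.sum_sub_distrib,
      ← Finset.sum_mul, hsum, one_mul]
    have : ∑ p ∈ T, ρ p * (2 * (inner ℝ w p : ℝ)) = 2 * (inner ℝ w z : ℝ) := by
      have h2 : ∑ p ∈ T, ρ p * (2 * (inner ℝ w p : ℝ))
          = 2 * ∑ p ∈ T, ρ p * (inner ℝ w p : ℝ) := by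
        rw [Finset.mul_sum]; exact Finset.sum_congr rfl fun p _ => by ring
      rw [h2, hinner w]
    rw [this]
  have hz : ∑ p ∈ T, ρ p * ‖p‖ ^ 2 = s + ‖z‖ ^ 2 := by
    have h0 : ∑ p ∈ T, ρ p * dist z p ^ 2 = s := by
      have hc : ∀ p ∈ T, ρ p * dist z p ^ 2 = ρ p * s := by
        intro p hp
        by_cases h : ρ p = 0
        · simp [h]
        · rw [hon p hp h]
      rw [Finset.sum_congr rfl hc, ← Finset.sum_mul, hsum, one_mul]
    have h1 := gen z
    rw [h0] at h1
    have hzz : (inner ℝ z z : ℝ) = ‖z‖ ^ 2 := real_inner_self_eq_norm_sq z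
    rw [hzz] at h1
    linarith
  have h2 := gen z'
  rw [hz] at h2
  have hd : dist z z' ^ 2 = ‖z‖ ^ 2 - 2 * (inner ℝ z z' : ℝ) + ‖z'‖ ^ 2 := by
    rw [dist_eq_norm, @norm_sub_sq_real]
  have hcomm : (inner ℝ z' z : ℝ) = (inner ℝ z z' : ℝ) := real_inner_comm z z'
  rw [h2, hcomm, hd]
  ring

theorem same_sphere_lemma_inclusion (n : ℕ)
    [DecidableEq (EuclideanSpace ℝ (Fin n))]
    (Q E : Finset (EuclideanSpace ℝ (Fin n)))
    (z : EuclideanSpace ℝ (Fin n)) (s : ℝ)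
    (hS : IsSmallestSphere Q E z s)
    (ρ : EuclideanSpace ℝ (Fin n) → ℝ)
    (hsupp : ∀ p, ρ p ≠ 0 → p ∈ Q ∪ E ∧ dist z p ^ 2 = s)
    (hrep : z = ∑ p ∈ Q ∪ E, ρ p • p)
    (hsum : ∑ p ∈ Q ∪ E, ρ p = 1)
    (hQpos : ∀ p ∈ Q \ E, 0 ≤ ρ p)
    (hEneg : ∀ p ∈ E \ Q, ρ p ≤ 0)
    (x : EuclideanSpace ℝ (Fin n))
    (hx_incl : dist z x ^ 2 ≤ s)
    (hx_notfront : ρ x ≤ 0) :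
    IsSmallestSphere (insert x Q) E z s ∧ IsSmallestSphere (Q.erase x) E z s := by
  obtain ⟨hs0, hQin, hEex, hmin⟩ := hS
  constructor
  · refine ⟨hs0, ?_, hEex, ?_⟩
    · intro q hq
      rcases Finset.mem_insert.mp hq with h | h
      · exact h ▸ hx_incl
      · exact hQin q h
    · intro z' s' hs' hq' he'
      exact hmin z' s' hs' (fun q hq => hq' q (Finset.mem_insert_of_mem hq)) he'
  · refine ⟨hs0, fun q hq => hQin q (Finset.mem_of_mem_erase hq), hEex, ?_⟩
    intro z' s' hs' hq' he'
    have A := key_sum (Q ∪ E) z z' s ρ (fun p _ h => (hsupp p h).2) hrep hsum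
    have nonpos : ∀ p ∈ Q ∪ E, ρ p * (dist z' p ^ 2 - s') ≤ 0 := by
      intro p hp
      by_cases hρ : ρ p = 0
      · simp [hρ]
      · by_cases hpx : p = x
        · subst hpx
          by_cases hpE : p ∈ E
          · have := he' p hpE
            nlinarith
          · have hpQ : p ∈ Q := by
              rcases Finset.mem_union.mp hp with h | h
              · exact h
              · exact absurd h hpE
            have := hQpos p (Finset.mem_sdiff.mpr ⟨hpQ, hpE⟩)
            exact absurd (le_antisymm hx_notfront this) hρ
        · by_cases hpE : p ∈ E
          · by_cases hpQ : p ∈ Q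
            · have h1 := hq' p (Finset.mem_erase.mpr ⟨hpx, hpQ⟩)
              have h2 := he' p hpE
              have : dist z' p ^ 2 - s' = 0 := by linarith
              simp [this]
            · have h1 := hEneg p (Finset.mem_sdiff.mpr ⟨hpE, hpQ⟩)
              have h2 := he' p hpE
              nlinarith
          · have hpQ : p ∈ Q := by
              rcases Finset.mem_union.mp hp with h | h
              · exact h
              · exact absurd h hpE
            have h1 := hQpos p (Finset.mem_sdiff.mpr ⟨hpQ, hpE⟩)
            have h2 := hq' p (Finset.mem_erase.mpr ⟨hpx, hpQ⟩)
            nlinarith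
    have hsum2 : ∑ p ∈ Q ∪ E, ρ p * (dist z' p ^ 2 - s') = s + dist z z' ^ 2 - s' := by
      simp_rw [mul_sub]
      rw [Finset.sum_sub_distrib, A, ← Finset.sum_mul, hsum, one_mul]
    have hle := Finset.sum_nonpos nonpos
    rw [hsum2] at hle
    nlinarith [sq_nonneg (dist z z')]
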